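/- Let F(Z,W) = (P(Z), Q(Z,W)) and F_0(Z,W) = (δZ, γZ + dW) with δ ≥ 2, d ≥ 2, γ ≥ 0, and suppose ‖F - F_0‖ < ε̃ (sup norm of components) on an F-invariant set V. Define Φ_n = F_0^{-n} ∘ F^n on V. Then for all n ≥ 0, |Φ_{n+1}^1 - Φ_n^1| < ε̃/δ^{n+1} and |Φ_{n+1}^2 - Φ_n^2| < ε̃/d^{n+1} + γ_{n+1} ε̃/(δ^{n+1} d^{n+1}) on V, where γ_n = Σ_{j=1}^n δ^{n-j} d^{j-1} γ. Consequently Φ_n converges uniformly on V. -/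

import Mathlib

private lemma stmt11_aux1 (a dl f1 y1 : ℂ) (ha : a ≠ 0) (h1 : dl ≠ 0) :
    f1 / (a * dl) - y1 / a = (f1 - dl * y1) / (a * dl) := by
  rw [div_sub_div _ _ (by simp [ha, h1] : a * dl ≠ 0) ha,
    div_eq_div_iff (by simp [ha, h1]) (by simp [ha, h1])]
  ring

private lemma stmt11_aux2 (a b dl dd : ℂ) (ha : a ≠ 0) (hb : b ≠ 0) (h1 : dl ≠ 0)
    (h2 : dd ≠ 0) (f1 f2 y1 y2 g gn : ℂ) :
    (f2 / (b * dd) - (g * a + dd * gn) * f1 / ((a * dl) * (b * dd)))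
      - (y2 / b - gn * y1 / (a * b)) =
    ((f2 - (g * y1 + dd * y2)) * (a * dl)
      - (g * a + dd * gn) * (f1 - dl * y1)) / ((a * dl) * (b * dd)) := by
  rw [div_sub_div _ _ (by simp [hb, h2] : b * dd ≠ 0)
      (by simp [ha, h1, hb, h2] : (a * dl) * (b * dd) ≠ 0),
    div_sub_div _ _ hb (by simp [ha, hb] : a * b ≠ 0),
    div_sub_div _ _ (by simp [ha, h1, hb, h2] : b * dd * (a * dl * (b * dd)) ≠ 0)
      (by simp [ha, hb] : b * (a * b) ≠ 0),
    div_eq_div_iff (by simp [ha, h1, hb, h2]) (by simp [ha, h1, hb, h2])]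
  ring

/-- let F be a map on an F-invariant set V with
‖F - F₀‖ < ε̃ on V, where F₀(Z,W) = (δZ, γZ + dW), δ ≥ 2, d ≥ 2, γ ≥ 0, and let
Φₙ = F₀⁻ⁿ ∘ Fⁿ, explicitly Φₙ(Z,W) = (Pₙ/δⁿ, Qₙ/dⁿ - γₙPₙ/(δⁿdⁿ)) with
γₙ = Σ_{j=1}^n δ^{n-j} d^{j-1} γ. Then on V, for all n,
|Φ¹_{n+1} - Φ¹ₙ| < ε̃/δ^{n+1} and |Φ²_{n+1} - Φ²ₙ| < ε̃/d^{n+1} + γ_{n+1}ε̃/(δ^{n+1}d^{n+1});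
consequently Φₙ converges uniformly on V. -/
theorem stmt11
    (δ d γ : ℕ) (hδ : 2 ≤ δ) (hd : 2 ≤ d)
    (ε : ℝ) (hε : 0 < ε)
    (F : ℂ × ℂ → ℂ × ℂ) (V : Set (ℂ × ℂ))
    (hinv : Set.MapsTo F V V)
    (hclose : ∀ x ∈ V, ‖(F x).1 - (δ : ℂ) * x.1‖ < ε ∧
      ‖(F x).2 - ((γ : ℂ) * x.1 + (d : ℂ) * x.2)‖ < ε)
    (gam : ℕ → ℕ) (hgam : ∀ n, gam n = ∑ j ∈ Finset.range n, δ ^ (n - 1 - j) * d ^ j * γ)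
    (Φ : ℕ → ℂ × ℂ → ℂ × ℂ)
    (hΦ : ∀ n x, Φ n x = ((F^[n] x).1 / (δ : ℂ) ^ n,
      (F^[n] x).2 / (d : ℂ) ^ n - (gam n : ℂ) * (F^[n] x).1 / ((δ : ℂ) ^ n * (d : ℂ) ^ n))) :
    (∀ n : ℕ, ∀ x ∈ V,
      ‖(Φ (n + 1) x).1 - (Φ n x).1‖ < ε / (δ : ℝ) ^ (n + 1) ∧
      ‖(Φ (n + 1) x).2 - (Φ n x).2‖ <
        ε / (d : ℝ) ^ (n + 1) + (gam (n + 1) : ℝ) * ε / ((δ : ℝ) ^ (n + 1) * (d : ℝ) ^ (n + 1)))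
    ∧ ∃ Φlim : ℂ × ℂ → ℂ × ℂ, TendstoUniformlyOn Φ Φlim Filter.atTop V := by
  have hδR : (2:ℝ) ≤ (δ:ℝ) := by exact_mod_cast hδ
  have hdR : (2:ℝ) ≤ (d:ℝ) := by exact_mod_cast hd
  have hδ0 : (0:ℝ) < (δ:ℝ) := by linarith
  have hd0 : (0:ℝ) < (d:ℝ) := by linarith
  have hδC : ((δ:ℂ)) ≠ 0 := Nat.cast_ne_zero.mpr (by omega)
  have hdC : ((d:ℂ)) ≠ 0 := Nat.cast_ne_zero.mpr (by omega)
  -- recursion for gam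
  have hgrec : ∀ n : ℕ, gam (n + 1) = γ * δ ^ n + d * gam n := by
    intro n
    rw [hgam, hgam, Finset.sum_range_succ']
    have h1 : ∀ j ∈ Finset.range n,
        δ ^ (n + 1 - 1 - (j + 1)) * d ^ (j + 1) * γ = d * (δ ^ (n - 1 - j) * d ^ j * γ) := by
      intro j hj
      have : n + 1 - 1 - (j + 1) = n - 1 - j := by omega
      rw [this, pow_succ]; ring
    rw [Finset.sum_congr rfl h1, ← Finset.mul_sum]
    simp [pow_zero, mul_one]
    ring
  -- key algebraic identities
  have key : ∀ (n : ℕ) (x : ℂ × ℂ),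
      (Φ (n+1) x).1 - (Φ n x).1
        = ((F (F^[n] x)).1 - (δ:ℂ) * (F^[n] x).1) / (δ:ℂ)^(n+1) ∧
      (Φ (n+1) x).2 - (Φ n x).2
        = (((F (F^[n] x)).2 - ((γ:ℂ) * (F^[n] x).1 + (d:ℂ) * (F^[n] x).2)) * (δ:ℂ)^(n+1)
          - (gam (n+1) : ℂ) * ((F (F^[n] x)).1 - (δ:ℂ) * (F^[n] x).1))
            / ((δ:ℂ)^(n+1) * (d:ℂ)^(n+1)) := by
    intro n x
    have hit : F^[n+1] x = F (F^[n] x) := Function.iterate_succ_apply' F n x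
    have hgC : ((gam (n+1) : ℕ) : ℂ) = (γ:ℂ) * (δ:ℂ) ^ n + (d:ℂ) * ((gam n : ℕ) : ℂ) := by
      rw [hgrec n]; push_cast; ring
    have ha : ((δ:ℂ))^n ≠ 0 := pow_ne_zero _ hδC
    have hb : ((d:ℂ))^n ≠ 0 := pow_ne_zero _ hdC
    constructor
    · rw [hΦ, hΦ, hit, pow_succ]
      exact stmt11_aux1 _ _ _ _ ha hδC
    · rw [hΦ, hΦ, hit, hgC, pow_succ (δ:ℂ), pow_succ (d:ℂ)]
      exact stmt11_aux2 _ _ _ _ ha hb hδC hdC _ _ _ _ _ _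
  -- norm facts
  have hnormδ : ∀ n : ℕ, ‖((δ:ℂ))^n‖ = (δ:ℝ)^n := by
    intro n; rw [norm_pow, Complex.norm_natCast]
  have hnormd : ∀ n : ℕ, ‖((d:ℂ))^n‖ = (d:ℝ)^n := by
    intro n; rw [norm_pow, Complex.norm_natCast]
  -- the main bounds
  have main : ∀ n : ℕ, ∀ x ∈ V,
      ‖(Φ (n + 1) x).1 - (Φ n x).1‖ < ε / (δ : ℝ) ^ (n + 1) ∧
      ‖(Φ (n + 1) x).2 - (Φ n x).2‖ <
        ε / (d : ℝ) ^ (n + 1) + (gam (n + 1) : ℝ) * ε / ((δ : ℝ) ^ (n + 1) * (d : ℝ) ^ (n + 1)) := by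
    intro n x hx
    obtain ⟨k1, k2⟩ := key n x
    have hy : F^[n] x ∈ V := hinv.iterate n hx
    obtain ⟨hA, hB⟩ := hclose _ hy
    have hδp : (0:ℝ) < (δ:ℝ)^(n+1) := pow_pos hδ0 _
    have hdp : (0:ℝ) < (d:ℝ)^(n+1) := pow_pos hd0 _
    constructor
    · rw [k1, norm_div, hnormδ]
      gcongr
    · rw [k2, norm_div, norm_mul, hnormδ, hnormd]
      have hnum : ‖((F (F^[n] x)).2 - ((γ:ℂ) * (F^[n] x).1 + (d:ℂ) * (F^[n] x).2)) * (δ:ℂ)^(n+1)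
          - (gam (n+1) : ℂ) * ((F (F^[n] x)).1 - (δ:ℂ) * (F^[n] x).1)‖
          < ε * (δ:ℝ)^(n+1) + (gam (n+1) : ℝ) * ε := by
        calc ‖_ - _‖ ≤ ‖((F (F^[n] x)).2 - ((γ:ℂ) * (F^[n] x).1 + (d:ℂ) * (F^[n] x).2)) * (δ:ℂ)^(n+1)‖
              + ‖(gam (n+1) : ℂ) * ((F (F^[n] x)).1 - (δ:ℂ) * (F^[n] x).1)‖ := norm_sub_le _ _
          _ = ‖(F (F^[n] x)).2 - ((γ:ℂ) * (F^[n] x).1 + (d:ℂ) * (F^[n] x).2)‖ * (δ:ℝ)^(n+1)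
              + (gam (n+1) : ℝ) * ‖(F (F^[n] x)).1 - (δ:ℂ) * (F^[n] x).1‖ := by
              rw [norm_mul, norm_mul, hnormδ, Complex.norm_natCast]
          _ < ε * (δ:ℝ)^(n+1) + (gam (n+1) : ℝ) * ε := by
              apply add_lt_add_of_lt_of_le
              · exact mul_lt_mul_of_pos_right hB hδp
              · exact mul_le_mul_of_nonneg_left hA.le (Nat.cast_nonneg _)
      calc _ < (ε * (δ:ℝ)^(n+1) + (gam (n+1) : ℝ) * ε) / ((δ:ℝ)^(n+1) * (d:ℝ)^(n+1)) := by
            gcongr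
        _ = ε / (d : ℝ) ^ (n + 1) + (gam (n + 1) : ℝ) * ε / ((δ : ℝ) ^ (n + 1) * (d : ℝ) ^ (n + 1)) := by
            field_simp
  refine ⟨main, ?_⟩
  -- uniform convergence
  set g : ℕ → ℂ × ℂ → ℂ × ℂ := fun k x => Φ (k+1) x - Φ k x with hg
  set u : ℕ → ℝ := fun k => 2 * ε * (1/2:ℝ)^k + γ * ε * ((k:ℝ) * (1/2:ℝ)^k) + γ * ε * (1/2:ℝ)^k
    with hu
  have hsum : Summable u := by
    have s1 : Summable (fun k : ℕ => (1/2:ℝ)^k) :=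
      summable_geometric_of_lt_one (by norm_num) (by norm_num)
    have s2 : Summable (fun k : ℕ => (k:ℝ) * (1/2:ℝ)^k) := by
      simpa using summable_pow_mul_geometric_of_norm_lt_one 1
        (r := (1/2:ℝ)) (by rw [Real.norm_eq_abs, abs_of_nonneg (by norm_num : (0:ℝ) ≤ 1/2)]; norm_num)
    exact ((s1.mul_left (2*ε)).add (s2.mul_left (γ*ε))).add (s1.mul_left (γ*ε))
  -- bound on g
  have hgb : ∀ k : ℕ, ∀ x ∈ V, ‖g k x‖ ≤ u k := by
    intro k x hx
    obtain ⟨m1, m2⟩ := main k x hx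
    have h2k : (0:ℝ) < 2^k := by positivity
    have hhalf : ((1:ℝ)/2)^k = 1 / 2^k := by rw [div_pow, one_pow]
    have hδp : (0:ℝ) < (δ:ℝ)^(k+1) := pow_pos hδ0 _
    have hdp : (0:ℝ) < (d:ℝ)^(k+1) := pow_pos hd0 _
    have h2δ : (2:ℝ)^(k+1) ≤ (δ:ℝ)^(k+1) := pow_le_pow_left₀ (by norm_num) hδR _
    have h2d : (2:ℝ)^(k+1) ≤ (d:ℝ)^(k+1) := pow_le_pow_left₀ (by norm_num) hdR _
    have hc1 : ε / (δ:ℝ)^(k+1) ≤ ε / 2^k := by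
      apply div_le_div_of_nonneg_left hε.le h2k
      calc (2:ℝ)^k ≤ 2^(k+1) := by
            apply pow_le_pow_right₀ (by norm_num); omega
        _ ≤ (δ:ℝ)^(k+1) := h2δ
    have hc2 : ε / (d:ℝ)^(k+1) ≤ ε / 2^k := by
      apply div_le_div_of_nonneg_left hε.le h2k
      calc (2:ℝ)^k ≤ 2^(k+1) := by
            apply pow_le_pow_right₀ (by norm_num); omega
        _ ≤ (d:ℝ)^(k+1) := h2d
    -- bound on the gam term
    have hnat : (gam (k+1)) * 2^(k+2) ≤ (k+1) * (δ^(k+1) * d^(k+1) * γ) := by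
      rw [hgam, Finset.sum_mul]
      calc ∑ j ∈ Finset.range (k+1), δ ^ (k + 1 - 1 - j) * d ^ j * γ * 2^(k+2)
          ≤ (Finset.range (k+1)).card • (δ^(k+1) * d^(k+1) * γ) := by
            apply Finset.sum_le_card_nsmul
            intro j hj
            have hjk : j ≤ k := by
              simpa [Nat.lt_succ_iff] using hj
            have e0 : k + 1 - 1 - j = k - j := by omega
            have e1 : (2:ℕ)^(k+2) = 2^(j+1) * 2^(k+1-j) := by
              rw [← pow_add]; congr 1; omega
            have e2 : δ^(k-j) * 2^(j+1) ≤ δ^(k+1) := by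
              calc δ^(k-j) * 2^(j+1) ≤ δ^(k-j) * δ^(j+1) :=
                    Nat.mul_le_mul_left _ (Nat.pow_le_pow_left hδ _)
                _ = δ^(k+1) := by rw [← pow_add]; congr 1; omega
            have e3 : d^j * 2^(k+1-j) ≤ d^(k+1) := by
              calc d^j * 2^(k+1-j) ≤ d^j * d^(k+1-j) :=
                    Nat.mul_le_mul_left _ (Nat.pow_le_pow_left hd _)
                _ = d^(k+1) := by rw [← pow_add]; congr 1; omega
            calc δ ^ (k + 1 - 1 - j) * d ^ j * γ * 2^(k+2)
                = (δ^(k-j) * 2^(j+1)) * (d^j * 2^(k+1-j)) * γ := by rw [e0, e1]; ring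
              _ ≤ δ^(k+1) * d^(k+1) * γ :=
                  Nat.mul_le_mul_right _ (Nat.mul_le_mul e2 e3)
        _ = (k+1) * (δ^(k+1) * d^(k+1) * γ) := by
            simp [Finset.card_range, smul_eq_mul]
    have hnatR : (gam (k+1) : ℝ) * 2^(k+2) ≤ ((k:ℝ)+1) * ((δ:ℝ)^(k+1) * (d:ℝ)^(k+1) * γ) := by
      exact_mod_cast hnat
    have hc3 : (gam (k+1) : ℝ) * ε / ((δ:ℝ)^(k+1) * (d:ℝ)^(k+1))
        ≤ ((k:ℝ)+1) * γ * ε / 2^k := by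
      rw [div_le_div_iff₀ (by positivity) h2k]
      have h2' : (2:ℝ)^k * 4 = 2^(k+2) := by rw [pow_add]; norm_num
      calc (gam (k+1) : ℝ) * ε * 2^k
          ≤ (gam (k+1) : ℝ) * ε * 2^(k+2) := by
            apply mul_le_mul_of_nonneg_left _ (by positivity)
            apply pow_le_pow_right₀ (by norm_num); omega
        _ = ((gam (k+1) : ℝ) * 2^(k+2)) * ε := by ring
        _ ≤ (((k:ℝ)+1) * ((δ:ℝ)^(k+1) * (d:ℝ)^(k+1) * γ)) * ε :=
            mul_le_mul_of_nonneg_right hnatR hε.le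
        _ = ((k:ℝ)+1) * γ * ε * ((δ:ℝ)^(k+1) * (d:ℝ)^(k+1)) := by ring
    -- combine
    have hfst : ‖(g k x).1‖ ≤ u k := by
      have : (g k x).1 = (Φ (k+1) x).1 - (Φ k x).1 := rfl
      rw [this]
      have h1 : ‖(Φ (k+1) x).1 - (Φ k x).1‖ ≤ ε / 2^k := le_trans m1.le hc1
      have h2 : (0:ℝ) ≤ γ * ε * ((k:ℝ) * (1/2:ℝ)^k) := by positivity
      have h3 : (0:ℝ) ≤ γ * ε * (1/2:ℝ)^k := by positivity
      have h4 : ε / 2^k ≤ 2 * ε * (1/2:ℝ)^k := by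
        rw [hhalf]
        rw [div_le_iff₀ h2k] at *
        calc ε ≤ 2 * ε := by linarith
          _ = 2 * ε * (1/2^k) * 2^k := by field_simp
      simp only [hu]
      linarith
    have hsnd : ‖(g k x).2‖ ≤ u k := by
      have : (g k x).2 = (Φ (k+1) x).2 - (Φ k x).2 := rfl
      rw [this]
      have h1 : ‖(Φ (k+1) x).2 - (Φ k x).2‖ ≤ ε / 2^k + ((k:ℝ)+1) * γ * ε / 2^k := by
        apply m2.le.trans
        exact add_le_add hc2 hc3
      have h4 : ε / 2^k ≤ 2 * ε * (1/2:ℝ)^k := by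
        rw [hhalf]
        rw [div_le_iff₀ h2k] at *
        calc ε ≤ 2 * ε := by linarith
          _ = 2 * ε * (1/2^k) * 2^k := by field_simp
      have h5 : ((k:ℝ)+1) * γ * ε / 2^k
          = γ * ε * ((k:ℝ) * (1/2:ℝ)^k) + γ * ε * (1/2:ℝ)^k := by
        rw [hhalf]; field_simp
      simp only [hu]
      linarith [h1, h4, h5.le, h5.ge]
    rw [Prod.norm_def]
    exact max_le hfst hsnd
  have T : TendstoUniformlyOn (fun N x => ∑ k ∈ Finset.range N, g k x)
      (fun x => ∑' k, g k x) Filter.atTop V := tendstoUniformlyOn_tsum_nat hsum hgb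
  have hconst : TendstoUniformlyOn (fun _ : ℕ => Φ 0) (Φ 0) Filter.atTop V := by
    intro uu huu
    filter_upwards with n x hx
    exact refl_mem_uniformity huu
  refine ⟨(Φ 0) + fun x => ∑' k, g k x, ?_⟩
  apply (hconst.add T).congr
  filter_upwards with n x hx
  have hsumtel : ∑ k ∈ Finset.range n, g k x = Φ n x - Φ 0 x := by
    simpa [hg] using Finset.sum_range_sub (fun i => Φ i x) n
  simp only [Pi.add_apply]
  rw [hsumtel]
  abel
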